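/- Let F_q be a finite field and n a positive integer such that (1) q ≢ 3 (mod 4) or 8 does not divide n, and (2) rad(n) divides q − 1. Set m = n/gcd(n, q − 1). Then for each divisor t of m, the number of distinct monic irreducible factors of x^n − 1 in F_q[x] of degree t equals (φ(t)/t) · gcd(n, q − 1), and x^n − 1 has no monic irreducible factor whose degree is not a divisor of m. -/

import Mathlib

open Polynomial

open UniqueFactorizationMonoid



-- geometric sum identity in ℕ
private lemma geom_nat (q : ℕ) (hq : 1 ≤ q) (s : ℕ) :
    (q - 1) * ∑ i ∈ Finset.range s, q ^ i = q ^ s - 1 := by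
  induction s with
  | zero => simp
  | succ s ih =>
    rw [Finset.sum_range_succ, Nat.mul_add, ih, pow_succ]
    have h1 : 1 ≤ q ^ s := Nat.one_le_pow _ _ hq
    have h2 : (q - 1) * q ^ s = q * q ^ s - q ^ s := by
      rw [Nat.sub_mul, one_mul]
    have h3 : q ^ s ≤ q * q ^ s := Nat.le_mul_of_pos_left _ hq
    rw [mul_comm (q ^ s) q]
    omega

private lemma pow_dvd_pow_imp_dvd (q : ℕ) (hq : 2 ≤ q) (t : ℕ) (ht : 0 < t) :
    ∀ s : ℕ, q ^ t - 1 ∣ q ^ s - 1 → t ∣ s := by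
  intro s
  induction s using Nat.strong_induction_on with
  | _ s ih =>
    intro h
    rcases Nat.lt_or_ge s t with hst | hst
    · rcases Nat.eq_zero_or_pos s with rfl | hs0
      · exact dvd_zero t
      · exfalso
        have h1 : q ^ s - 1 < q ^ t - 1 := by
          have := Nat.pow_lt_pow_right (by omega : 1 < q) hst
          have h2 : 1 ≤ q ^ s := Nat.one_le_pow _ _ (by omega)
          omega
        have h2 : 0 < q ^ s - 1 := by
          have := Nat.one_lt_pow hs0.ne' hq
          omega
        exact absurd (Nat.le_of_dvd h2 h) (by omega)
    · have hd1 : q ^ t - 1 ∣ q ^ s - q ^ (s - t) := by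
        have : q ^ s - q ^ (s - t) = q ^ (s - t) * (q ^ t - 1) := by
          rw [Nat.mul_sub, mul_one, ← pow_add, Nat.sub_add_cancel hst]
        rw [this]
        exact Dvd.intro_left _ rfl
      have hle : q ^ (s - t) ≤ q ^ s := Nat.pow_le_pow_right (by omega) (by omega)
      have hd2 : q ^ t - 1 ∣ q ^ (s - t) - 1 := by
        have heq : q ^ (s - t) - 1 = (q ^ s - 1) - (q ^ s - q ^ (s - t)) := by
          have h2 : 1 ≤ q ^ (s - t) := Nat.one_le_pow _ _ (by omega)
          omega
        rw [heq]
        exact Nat.dvd_sub h hd1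
      rcases Nat.eq_zero_or_pos (s - t) with hz | hpos
      · have : s = t := by omega
        exact this ▸ dvd_rfl
      · have h3 := ih (s - t) (by omega) hd2
        have := Nat.dvd_add h3 (dvd_refl t)
        rwa [Nat.sub_add_cancel hst] at this


-- v_2 x = 1 when x ≡ 2 mod 4
private lemma fact2_eq_one {x : ℕ} (h2 : 2 ∣ x) (h4 : ¬ 4 ∣ x) :
    x.factorization 2 = 1 := by
  have hx0 : x ≠ 0 := by rintro rfl; exact h4 (dvd_zero 4)
  have h1 : 1 ≤ x.factorization 2 := by
    rw [← Nat.Prime.pow_dvd_iff_le_factorization Nat.prime_two hx0]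
    simpa using h2
  have h2' : ¬ 2 ≤ x.factorization 2 := by
    rw [← Nat.Prime.pow_dvd_iff_le_factorization Nat.prime_two hx0]
    simpa using h4
  omega

private lemma aux_gcd_pow (q n : ℕ) (hq : 2 ≤ q) (hn : 0 < n)
    (h1 : q % 4 ≠ 3 ∨ ¬ (8 ∣ n)) (h2 : (∏ p ∈ n.primeFactors, p) ∣ (q - 1))
    (s : ℕ) (hs : 0 < s) :
    Nat.gcd n (q ^ s - 1) = Nat.gcd n (q - 1) * Nat.gcd s (n / Nat.gcd n (q - 1)) := by
  have hq1 : q - 1 ≠ 0 := by omega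
  have hqs : q ^ s - 1 ≠ 0 := by
    have := Nat.one_lt_pow hs.ne' hq
    omega
  have hd0 : Nat.gcd n (q - 1) ≠ 0 := fun h => hn.ne' (Nat.eq_zero_of_gcd_eq_zero_left h)
  have hdn : Nat.gcd n (q - 1) ∣ n := Nat.gcd_dvd_left _ _
  have hm0 : n / Nat.gcd n (q - 1) ≠ 0 := by
    have := Nat.div_pos (Nat.le_of_dvd hn hdn) (Nat.pos_of_ne_zero hd0)
    omega
  have hgsm : Nat.gcd s (n / Nat.gcd n (q - 1)) ≠ 0 :=
    fun h => hs.ne' (Nat.eq_zero_of_gcd_eq_zero_left h)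
  refine Nat.eq_of_factorization_eq
    (fun h => hn.ne' (Nat.eq_zero_of_gcd_eq_zero_left h))
    (Nat.mul_ne_zero hd0 hgsm)
    (fun p => ?_)
  by_cases hp : p.Prime
  · haveI : Fact p.Prime := ⟨hp⟩
    rw [Nat.factorization_gcd hn.ne' hqs, Nat.factorization_mul hd0 hgsm,
      Nat.factorization_gcd hs.ne' hm0, Nat.factorization_gcd hn.ne' hq1]
    simp only [Finsupp.inf_apply, Finsupp.add_apply, Finsupp.inf_apply]
    rw [Nat.factorization_div hdn]
    simp only [Finsupp.tsub_apply, Nat.factorization_gcd hn.ne' hq1, Finsupp.inf_apply]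
    set a := n.factorization p with ha
    set b := (q - 1).factorization p with hb
    set S := s.factorization p with hS
    set V := (q ^ s - 1).factorization p with hV
    -- goal : min a V = min a b + min S (a - min a b)
    by_cases ha0 : a = 0
    · simp [ha0]
    · have hpn : p ∣ n := Nat.dvd_of_factorization_pos ha0
      have hpq1 : p ∣ q - 1 :=
        dvd_trans (Finset.dvd_prod_of_mem _ (Nat.mem_primeFactors.mpr ⟨hp, hpn, hn.ne'⟩)) h2
      have hb1 : 1 ≤ b := by
        rw [hb, ← Nat.Prime.pow_dvd_iff_le_factorization hp hq1]
        simpa using hpq1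
      have hpq : ¬ p ∣ q := by
        intro h
        have := Nat.dvd_sub h hpq1
        rw [Nat.sub_sub_self (by omega)] at this
        exact hp.one_lt.ne' (Nat.dvd_one.mp this)
      -- convert to padicValNat
      have hfa : ∀ x : ℕ, x.factorization p = padicValNat p x := fun x => Nat.factorization_def x hp
      rcases Nat.Prime.eq_two_or_odd' hp with hp2 | hodd
      case' neg.inr =>
        -- odd prime: LTE
        have hlte := padicValNat.pow_sub_pow (p := p) hodd (x := q) (y := 1)
          (by omega) (by simpa using hpq1) (by simpa using hpq) hs.ne'
        simp only [one_pow] at hlte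
        have hVeq : V = b + S := by
          rw [hV, hb, hS, hfa, hfa, hfa]
          exact hlte
        omega
      case neg.inl =>
        subst hp2
        have hqodd : ¬ 2 ∣ q := hpq
        by_cases hsodd : 2 ∣ s
        · -- s even : LTE for 2
          have hS1 : 1 ≤ S := by
            rw [hS, ← Nat.Prime.pow_dvd_iff_le_factorization Nat.prime_two hs.ne']
            simpa using hsodd
          have hlte := padicValNat.pow_two_sub_pow (x := q) (y := 1)
            (by omega) (by simpa using hpq1) (by simpa using hqodd) hs.ne'
            (even_iff_two_dvd.mpr hsodd)
          simp only [one_pow] at hlte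
          have hVeq : V + 1 = padicValNat 2 (q + 1) + b + S := by
            rw [hV, hb, hS, hfa, hfa, hfa]
            omega
          have hqmod : q % 2 = 1 := by omega
          rcases (by omega : q % 4 = 1 ∨ q % 4 = 3) with hq4 | hq4
          · -- q ≡ 1 mod 4 : v2(q+1) = 1
            have hc : (q + 1).factorization 2 = 1 :=
              fact2_eq_one (by omega) (by omega)
            rw [hfa] at hc
            omega
          · -- q ≡ 3 mod 4 : b = 1, a ≤ 2, V ≥ 3
            have h8 : ¬ 8 ∣ n := h1.resolve_left (fun h => h hq4)
            have ha2 : a ≤ 2 := by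
              by_contra hcon
              exact h8 (by
                have : (2:ℕ) ^ 3 ∣ n := by
                  rw [Nat.Prime.pow_dvd_iff_le_factorization Nat.prime_two hn.ne']
                  omega
                simpa using this)
            have hbeq : b = 1 := by
              rw [hb]
              exact fact2_eq_one (by omega) (by omega)
            have hc2 : 2 ≤ padicValNat 2 (q + 1) := by
              rw [← hfa, ← Nat.Prime.pow_dvd_iff_le_factorization Nat.prime_two (by omega)]
              omega
            omega
        · -- s odd : v2(q^s - 1) = v2(q - 1)
          have hS0 : S = 0 := by
            rw [hS, hfa]
            exact padicValNat.eq_zero_of_not_dvd hsodd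
          set T := ∑ i ∈ Finset.range s, q ^ i with hT
          have hfact : q ^ s - 1 = (q - 1) * T := (geom_nat q (by omega) s).symm
          have hTodd : T % 2 = 1 := by
            rw [hT, Finset.sum_nat_mod]
            have : ∀ i ∈ Finset.range s, q ^ i % 2 = 1 := by
              intro i _
              exact Nat.odd_iff.mp (Odd.pow (Nat.odd_iff.mpr (by omega)))
            rw [Finset.sum_congr rfl this]
            simp
            omega
          have hVeq : V = b := by
            rw [hV, hb, hfa, hfa, hfact,
              padicValNat.mul (by omega) (by omega)]
            have : padicValNat 2 T = 0 := padicValNat.eq_zero_of_not_dvd (by omega)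
            omega
          omega
  · simp [Nat.factorization_eq_zero_of_not_prime _ hp]



private lemma dvd_iff_natDegree_dvd {F : Type*} [Field F] [Fintype F]
    {f : Polynomial F} (hmon : f.Monic) (hirr : Irreducible f)
    {n : ℕ} (hn : 0 < n) (hfn : f ∣ (X ^ n - 1 : Polynomial F))
    (s : ℕ) (hs : 0 < s) :
    f ∣ (X ^ (Nat.gcd n (Fintype.card F ^ s - 1)) - 1 : Polynomial F) ↔ f.natDegree ∣ s := by
  classical
  set q := Fintype.card F with hqdef
  have hq2 : 2 ≤ q := Fintype.one_lt_card
  haveI : Fact (Irreducible f) := ⟨hirr⟩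
  set K := AdjoinRoot f with hK
  set α : K := AdjoinRoot.root f with hα
  have hcrit : ∀ g : Polynomial F, f ∣ g ↔ (aeval α) g = 0 := by
    intro g
    rw [hα, AdjoinRoot.aeval_eq, AdjoinRoot.mk_eq_zero]
  have hαn : α ^ n = 1 := by
    have := (hcrit _).mp hfn
    simp only [map_sub, map_pow, aeval_X, map_one] at this
    exact sub_eq_zero.mp this
  have hα0 : α ≠ 0 := by
    intro h
    rw [h, zero_pow hn.ne'] at hαn
    exact one_ne_zero hαn.symm
  -- K is a finite field of cardinality q ^ t
  set pb := AdjoinRoot.powerBasis (hmon.ne_zero) with hpb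
  haveI : Module.Finite F K := Module.Finite.of_basis pb.basis
  haveI : Fintype K := Module.fintypeOfFintype pb.basis
  set t := f.natDegree with ht
  have ht0 : 0 < t := hirr.natDegree_pos
  have hcardK : Fintype.card K = q ^ t := by
    rw [Module.card_eq_pow_finrank (K := F) (V := K), pb.finrank]
    rfl
  have hαqt : α ^ (q ^ t - 1) = 1 := by
    have h1 : α ^ (q ^ t) = α := by
      rw [← hcardK]
      exact FiniteField.pow_card α
    have h2 : α ^ (q ^ t - 1) * α = 1 * α := by
      rw [one_mul, ← pow_succ]
      have : q ^ t - 1 + 1 = q ^ t := by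
        have := Nat.one_le_pow t q (by omega)
        omega
      rw [this, h1]
    exact mul_right_cancel₀ hα0 h2
  have hord : orderOf α ∣ n := orderOf_dvd_of_pow_eq_one hαn
  constructor
  · -- f ∣ X^g - 1 → t ∣ s
    intro hdvd
    have hαg : α ^ (Nat.gcd n (q ^ s - 1)) = 1 := by
      have := (hcrit _).mp hdvd
      simp only [map_sub, map_pow, aeval_X, map_one] at this
      exact sub_eq_zero.mp this
    have hαqs : α ^ (q ^ s - 1) = 1 := by
      obtain ⟨c, hc⟩ := Nat.gcd_dvd_right n (q ^ s - 1)
      rw [hc, pow_mul, hαg, one_pow]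
    have hαqs' : α ^ (q ^ s) = α := by
      have : q ^ s - 1 + 1 = q ^ s := by
        have := Nat.one_le_pow s q (by omega)
        omega
      calc α ^ (q ^ s) = α ^ (q ^ s - 1 + 1) := by rw [this]
      _ = α ^ (q ^ s - 1) * α := pow_succ _ _
      _ = α := by rw [hαqs, one_mul]
    -- the q^s-power map is an F-algebra endomorphism of K
    set p := ringChar F with hp
    haveI : CharP F p := ringChar.charP F
    have hpprime : p.Prime := CharP.char_is_prime F p
    haveI : Fact p.Prime := ⟨hpprime⟩
    haveI : CharP K p := charP_of_injective_algebraMap (algebraMap F K).injective p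
    obtain ⟨k, hpk, hqk⟩ := FiniteField.card F p
    have hqs_eq : q ^ s = p ^ ((k : ℕ) * s) := by rw [pow_mul, ← hqk]
    haveI : ExpChar K p := ExpChar.prime hpprime
    set ψ₀ : K →+* K := iterateFrobenius K p ((k : ℕ) * s) with hψ₀
    have hψ₀app : ∀ x : K, ψ₀ x = x ^ (q ^ s) := by
      intro x
      rw [hψ₀, iterateFrobenius_def, ← hqs_eq]
    have hcomm : ∀ c : F, ψ₀ (algebraMap F K c) = algebraMap F K c := by
      intro c
      rw [hψ₀app, ← map_pow, FiniteField.pow_card_pow]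
    set ψ : K →ₐ[F] K := AlgHom.mk' ψ₀ (fun c x => by
      rw [Algebra.smul_def, Algebra.smul_def, map_mul, hcomm]) with hψ
    have hψα : ψ α = α := by
      show ψ₀ α = α
      rw [hψ₀app, hαqs']
    have hψid : ψ = AlgHom.id F K := by
      apply pb.algHom_ext
      have hgen : pb.gen = α := AdjoinRoot.powerBasis_gen hmon.ne_zero
      rw [hgen, hψα]
      rfl
    have hall : ∀ x : K, x ^ (q ^ s) = x := by
      intro x
      have h1 : ψ x = x := by rw [hψid]; rfl
      rw [← hψ₀app x]
      exact h1
    -- apply to a generator of Kˣ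
    obtain ⟨ζ, hζ⟩ := IsCyclic.exists_generator (α := Kˣ)
    have hζord : orderOf ζ = q ^ t - 1 := by
      rw [orderOf_eq_card_of_forall_mem_zpowers hζ, Nat.card_units, Nat.card_eq_fintype_card, hcardK]
    have hζpow : ζ ^ (q ^ s) = ζ := by
      apply Units.ext
      rw [Units.val_pow_eq_pow_val]
      exact hall ζ.val
    have hζ1 : ζ ^ (q ^ s - 1) = 1 := by
      have h2 : ζ ^ (q ^ s - 1) * ζ = 1 * ζ := by
        rw [one_mul, ← pow_succ]
        have : q ^ s - 1 + 1 = q ^ s := by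
          have := Nat.one_le_pow s q (by omega)
          omega
        rw [this, hζpow]
      exact mul_right_cancel h2
    have hdvd2 : q ^ t - 1 ∣ q ^ s - 1 := by
      rw [← hζord]
      exact orderOf_dvd_of_pow_eq_one hζ1
    exact pow_dvd_pow_imp_dvd q hq2 t ht0 s hdvd2
  · -- t ∣ s → f ∣ X^g - 1
    intro hts
    have hdvd2 : q ^ t - 1 ∣ q ^ s - 1 := by
      obtain ⟨c, hc⟩ := hts
      have := Nat.sub_dvd_pow_sub_pow (q ^ t) 1 c
      rwa [one_pow, ← pow_mul, ← hc] at this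
    have hord2 : orderOf α ∣ q ^ s - 1 :=
      dvd_trans (orderOf_dvd_of_pow_eq_one hαqt) hdvd2
    have hαg : α ^ (Nat.gcd n (q ^ s - 1)) = 1 :=
      orderOf_dvd_iff_pow_eq_one.mp (Nat.dvd_gcd hord hord2)
    rw [hcrit]
    simp only [map_sub, map_pow, aeval_X, map_one]
    rw [hαg, sub_self]



private lemma mem_factors_iff' {F : Type*} [Field F] [DecidableEq F]
    {P f : Polynomial F} (hP : P.Monic) :
    f ∈ (normalizedFactors P).toFinset ↔ f.Monic ∧ Irreducible f ∧ f ∣ P := by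
  rw [Multiset.mem_toFinset]
  constructor
  · intro h
    have hirr := irreducible_of_normalized_factor f h
    have hnorm := normalize_normalized_factor f h
    refine ⟨?_, hirr, dvd_of_mem_normalizedFactors h⟩
    rw [← hnorm]
    exact monic_normalize hirr.ne_zero
  · rintro ⟨hm, hi, hd⟩
    obtain ⟨g, hgmem, hassoc⟩ := exists_mem_normalizedFactors_of_dvd hP.ne_zero hi hd
    have hgmon : g.Monic := by
      have := normalize_normalized_factor g hgmem
      rw [← this]
      exact monic_normalize (irreducible_of_normalized_factor g hgmem).ne_zero
    rwa [eq_of_monic_of_associated hm hgmon hassoc]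

private lemma sum_deg_factors {F : Type*} [Field F] [DecidableEq F]
    {P : Polynomial F} (hP : P.Monic) (hsq : Squarefree P) :
    ∑ f ∈ (normalizedFactors P).toFinset, f.natDegree = P.natDegree := by
  have hnodup : (normalizedFactors P).Nodup :=
    (squarefree_iff_nodup_normalizedFactors hP.ne_zero).mp hsq
  have hprodassoc := prod_normalizedFactors hP.ne_zero
  have hmon : ∀ g ∈ normalizedFactors P, g.Monic := fun g hg => by
    have := normalize_normalized_factor g hg
    rw [← this]
    exact monic_normalize (irreducible_of_normalized_factor g hg).ne_zero
  have hprodmon : (normalizedFactors P).prod.Monic := by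
    have := monic_multiset_prod_of_monic (normalizedFactors P) id hmon
    rwa [Multiset.map_id] at this
  have hprod : (normalizedFactors P).prod = P :=
    eq_of_monic_of_associated hprodmon hP hprodassoc
  have hdeg : ((normalizedFactors P).map natDegree).sum = P.natDegree := by
    conv_rhs => rw [← hprod]
    rw [natDegree_multiset_prod _ (fun h0 => (hmon 0 h0).ne_zero rfl)]
  rw [Finset.sum_eq_multiset_sum, Multiset.toFinset_val,
    Multiset.dedup_eq_self.mpr hnodup]
  exact hdeg

/-- Under the hypotheses of the binomial factorization (`q ≢ 3 (mod 4)` or `8 ∤ n`, and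
`rad(n) ∣ q - 1`), for each divisor `t` of `m = n / gcd(n, q-1)` the number of distinct
monic irreducible factors of `x^n - 1` of degree `t` is `(φ(t)/t)·gcd(n, q-1)`, and every
monic irreducible factor has degree dividing `m`. -/
theorem count_irreducible_factors_of_degree {F : Type*} [Field F] [Fintype F]
    (q : ℕ) (hq : q = Fintype.card F) (n : ℕ) (hn : 0 < n)
    (h1 : q % 4 ≠ 3 ∨ ¬ (8 ∣ n))
    (h2 : (∏ p ∈ n.primeFactors, p) ∣ (q - 1))
    (m : ℕ) (hm : m = n / Nat.gcd n (q - 1)) :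
    (∀ t, t ∣ m →
      (({f : Polynomial F | f.Monic ∧ Irreducible f ∧ f ∣ (X ^ n - 1 : Polynomial F) ∧
            f.natDegree = t}.ncard : ℚ)
        = (Nat.totient t : ℚ) / (t : ℚ) * (Nat.gcd n (q - 1) : ℚ))) ∧
    ∀ f : Polynomial F, f.Monic → Irreducible f → f ∣ (X ^ n - 1 : Polynomial F) →
      f.natDegree ∣ m := by
  classical
  subst hq hm
  set q := Fintype.card F with hqdef
  have hq2 : 2 ≤ q := Fintype.one_lt_card
  set d := Nat.gcd n (q - 1) with hddef
  set m := n / d with hmdef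
  have hdn : d ∣ n := Nat.gcd_dvd_left _ _
  have hd0 : 0 < d := Nat.pos_of_dvd_of_pos hdn hn
  have hm0 : 0 < m := Nat.div_pos (Nat.le_of_dvd hn hdn) hd0
  have hdm : d * m = n := Nat.mul_div_cancel' hdn
  -- the characteristic does not divide n
  have hpn : ¬ ringChar F ∣ n := by
    intro hdvd
    set p := ringChar F with hpdef
    haveI : CharP F p := ringChar.charP F
    have hp : p.Prime := CharP.char_is_prime F p
    have hpq1 : p ∣ q - 1 :=
      dvd_trans (Finset.dvd_prod_of_mem _ (Nat.mem_primeFactors.mpr ⟨hp, hdvd, hn.ne'⟩)) h2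
    obtain ⟨k, -, hqk⟩ := FiniteField.card F p
    have hpq : p ∣ q := by
      rw [hqdef, hqk]
      exact dvd_pow_self p k.ne_zero
    have := Nat.dvd_sub hpq hpq1
    rw [Nat.sub_sub_self (by omega)] at this
    exact hp.one_lt.ne' (Nat.dvd_one.mp this)
  have hXg : ∀ g : ℕ, (X ^ g - 1 : Polynomial F) = X ^ g - C 1 := by
    intro g; rw [map_one]
  have hmonXg : ∀ g : ℕ, 0 < g → (X ^ g - 1 : Polynomial F).Monic := by
    intro g hg
    rw [hXg]
    exact monic_X_pow_sub_C 1 hg.ne'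
  have hsqf : ∀ g : ℕ, 0 < g → g ∣ n → Squarefree (X ^ g - 1 : Polynomial F) := by
    intro g hg hgn
    have hgF : (g : F) ≠ 0 := by
      intro h
      rw [CharP.cast_eq_zero_iff F (ringChar F) g] at h
      exact hpn (h.trans hgn)
    rw [hXg]
    exact (separable_X_pow_sub_C 1 hgF one_ne_zero).squarefree
  have harith : ∀ s : ℕ, 0 < s → Nat.gcd n (q ^ s - 1) = d * Nat.gcd s m :=
    fun s hs => aux_gcd_pow q n hq2 hn h1 h2 s hs
  have hdvdXn : ∀ g : ℕ, g ∣ n → (X ^ g - 1 : Polynomial F) ∣ X ^ n - 1 := by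
    intro g hgn
    have h := sub_dvd_pow_sub_pow (X ^ g : Polynomial F) 1 (n / g)
    rwa [one_pow, ← pow_mul, Nat.mul_div_cancel' hgn] at h
  -- part 2
  have hpart2 : ∀ f : Polynomial F, f.Monic → Irreducible f →
      f ∣ (X ^ n - 1 : Polynomial F) → f.natDegree ∣ m := by
    intro f hmon hirr hdvd
    have hiff := dvd_iff_natDegree_dvd hmon hirr hn hdvd m hm0
    rw [harith m hm0, Nat.gcd_self, hdm] at hiff
    exact hiff.mp hdvd
  refine ⟨?_, hpart2⟩
  -- part 1 : counting
  intro t ht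
  have ht0 : 0 < t := Nat.pos_of_dvd_of_pos ht hm0
  set T := (normalizedFactors (X ^ n - 1 : Polynomial F)).toFinset with hTdef
  have memT : ∀ f : Polynomial F,
      f ∈ T ↔ f.Monic ∧ Irreducible f ∧ f ∣ (X ^ n - 1 : Polynomial F) :=
    fun f => mem_factors_iff' (hmonXg n hn)
  set A : ℕ → ℕ := fun u => ∑ f ∈ T.filter (fun f => f.natDegree = u), f.natDegree with hA
  set B : ℕ → ℕ := fun u => if u ∣ m then d * u.totient else 0 with hB
  have key : ∀ s : ℕ, 0 < s → ∑ u ∈ s.divisors, A u = d * Nat.gcd s m := by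
    intro s hs
    have h1' : ∑ u ∈ s.divisors, A u
        = ∑ f ∈ T.filter (fun f => f.natDegree ∈ s.divisors), f.natDegree :=
      Finset.sum_fiberwise_eq_sum_filter _ _ _ _
    set g := Nat.gcd n (q ^ s - 1) with hgdef
    have hgdvd : g ∣ n := Nat.gcd_dvd_left _ _
    have hg0 : 0 < g := Nat.pos_of_dvd_of_pos (Nat.gcd_dvd_left _ _) hn
    have hset : T.filter (fun f => f.natDegree ∈ s.divisors)
        = (normalizedFactors (X ^ g - 1 : Polynomial F)).toFinset := by
      ext f
      rw [Finset.mem_filter, memT, mem_factors_iff' (hmonXg g hg0), Nat.mem_divisors]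
      constructor
      · rintro ⟨⟨hm', hi', hd'⟩, hds, -⟩
        exact ⟨hm', hi', (dvd_iff_natDegree_dvd hm' hi' hn hd' s hs).mpr hds⟩
      · rintro ⟨hm', hi', hd'⟩
        have hdN : f ∣ (X ^ n - 1 : Polynomial F) := hd'.trans (hdvdXn g hgdvd)
        exact ⟨⟨hm', hi', hdN⟩,
          (dvd_iff_natDegree_dvd hm' hi' hn hdN s hs).mp hd', hs.ne'⟩
    rw [h1', hset, sum_deg_factors (hmonXg g hg0) (hsqf g hg0 hgdvd), hXg,
      natDegree_X_pow_sub_C, hgdef, harith s hs]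
  have keyB : ∀ s : ℕ, 0 < s → ∑ u ∈ s.divisors, B u = d * Nat.gcd s m := by
    intro s hs
    have hgne : Nat.gcd s m ≠ 0 := fun h => hs.ne' (Nat.eq_zero_of_gcd_eq_zero_left h)
    rw [hB]
    rw [← Finset.sum_filter]
    have hfd : s.divisors.filter (fun u => u ∣ m) = (Nat.gcd s m).divisors := by
      ext u
      simp only [Finset.mem_filter, Nat.mem_divisors, Nat.dvd_gcd_iff]
      constructor
      · rintro ⟨⟨h1'', -⟩, h2''⟩; exact ⟨⟨h1'', h2''⟩, hgne⟩
      · rintro ⟨⟨h1'', h2''⟩, -⟩; exact ⟨⟨h1'', hs.ne'⟩, h2''⟩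
    rw [hfd, ← Finset.mul_sum, Nat.sum_totient]
  have hAB : ∀ s : ℕ, 0 < s → A s = B s := by
    intro s
    induction s using Nat.strong_induction_on with
    | _ s ih =>
      intro hs
      have h1' := key s hs
      have h2' := keyB s hs
      rw [← Nat.insert_self_properDivisors hs.ne', Finset.sum_insert
        Nat.self_notMem_properDivisors] at h1' h2'
      have hsum : ∑ u ∈ s.properDivisors, A u = ∑ u ∈ s.properDivisors, B u := by
        refine Finset.sum_congr rfl (fun u hu => ?_)
        have hu' := Nat.mem_properDivisors.mp hu
        exact ih u hu'.2 (Nat.pos_of_dvd_of_pos hu'.1 hs)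
      omega
  -- conclude for t
  have hsetEq : {f : Polynomial F | f.Monic ∧ Irreducible f ∧
        f ∣ (X ^ n - 1 : Polynomial F) ∧ f.natDegree = t}
      = ↑(T.filter (fun f => f.natDegree = t)) := by
    ext f
    simp only [Set.mem_setOf_eq, Finset.coe_filter, memT f, Set.mem_setOf_eq]
    tauto
  rw [hsetEq, Set.ncard_coe_finset]
  have hAt : A t = (T.filter (fun f => f.natDegree = t)).card * t := by
    calc A t = ∑ _f ∈ T.filter (fun f => f.natDegree = t), t :=
          Finset.sum_congr rfl (fun f hf => (Finset.mem_filter.mp hf).2)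
    _ = (T.filter (fun f => f.natDegree = t)).card * t := by
          rw [Finset.sum_const, smul_eq_mul]
  have hBt : B t = d * t.totient := by rw [hB]; simp [ht]
  have hnat : (T.filter (fun f => f.natDegree = t)).card * t = d * t.totient := by
    rw [← hAt, hAB t ht0, hBt]
  have hQ : ((T.filter (fun f => f.natDegree = t)).card : ℚ) * t
      = (d : ℚ) * t.totient := by exact_mod_cast hnat
  have htQ : (t : ℚ) ≠ 0 := Nat.cast_ne_zero.mpr ht0.ne'
  field_simp
  linear_combination hQ
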